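/- Let ν, ℓ be constants and let (G,𝔓) be relatively hyperbolic with generating set X. There exists α = α(ν, ℓ, G, 𝔓, X) such that: if s is a ν-taut path of length ℓ in the relative Cayley graph whose endpoints both lie in a peripheral coset gP (P ∈ 𝔓), then M(s) − α ≤ |s|_X ≤ len_X(s) ≤ M(s) + α, where M(s) is the maximal X-length of an edge of s with both endpoints in gP (and M(s) = 0 if no such edge exists), |s|_X is the X-distance between the endpoints of s, and len_X(s) is the sum of the X-distances between consecutive vertices of s. -/

import Mathlib

section RelHyp

variable {G : Type*} [Group G] {ι : Type*}

/-- The `a`-th vertex of a path given by its list of vertices (junk value `1`). -/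
def vtx (p : List G) (a : ℕ) : G := p.getD a 1

/-- A path in the relative Cayley graph `Cay(G, X ∪ 𝒫)`: a nonempty list of vertices in
which consecutive vertices differ by a generator from `X` or from some peripheral
subgroup `P i`. -/
def IsRelPath (X : Set G) (P : ι → Subgroup G) (p : List G) : Prop :=
  p ≠ [] ∧ List.Chain' (fun u v => u ≠ v ∧ (u⁻¹ * v ∈ X ∨ ∃ i, u⁻¹ * v ∈ P i)) p

/-- The `j`-th edge of `p` is a `P i`-edge (its label lies in `P i`). -/
def IsPEdge (P : ι → Subgroup G) (p : List G) (i : ι) (j : ℕ) : Prop :=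
  j + 1 < p.length ∧ (vtx p j)⁻¹ * vtx p (j + 1) ∈ P i

/-- Vertices `j` and `j'` of `p` lie in the same left coset of `P i`. -/
def SameCoset (P : ι → Subgroup G) (p : List G) (i : ι) (j j' : ℕ) : Prop :=
  (vtx p j)⁻¹ * vtx p j' ∈ P i

/-- `p` is non-backtracking: all of its peripheral components are isolated, i.e. any two
`P i`-edges lying in the same coset of `P i` belong to the same (contiguous) component. -/
def NonBacktracking (P : ι → Subgroup G) (p : List G) : Prop :=
  ∀ i j j', j < j' → IsPEdge P p i j → IsPEdge P p i j' → SameCoset P p i j j' →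
    ∀ m, j ≤ m → m ≤ j' → IsPEdge P p i m

/-- The edges `j ≤ m ≤ j'` form a maximal `P i`-component of `p`. -/
def IsComponent (P : ι → Subgroup G) (p : List G) (i : ι) (j j' : ℕ) : Prop :=
  j ≤ j' ∧ (∀ m, j ≤ m → m ≤ j' → IsPEdge P p i m) ∧
    ¬IsPEdge P p i (j' + 1) ∧ (j = 0 ∨ ¬IsPEdge P p i (j - 1))

/-- The word metric on `G` associated to a (not necessarily finite) generating set `S`. -/
noncomputable def wdist (S : Set G) (u v : G) : ℕ :=
  sInf {n | ∃ l : List G, l.length = n ∧ (∀ x ∈ l, x ∈ S) ∧ l.prod = u⁻¹ * v}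

/-- The generating set `X ∪ ⋃ i, P i` of the relative Cayley graph. -/
def relGen (X : Set G) (P : ι → Subgroup G) : Set G := X ∪ ⋃ i, (P i : Set G)

/-- `p` is a `λ`-quasi-geodesic in the relative Cayley graph. -/
def IsQG (X : Set G) (P : ι → Subgroup G) (lam : ℝ) (p : List G) : Prop :=
  ∀ a b : ℕ, a ≤ b → b < p.length →
    (b - a : ℝ) ≤ lam * (wdist (relGen X P) (vtx p a) (vtx p b) : ℝ) + lam

/-- The bounded coset penetration property for the pair `(G, 𝔓)` with respect to `X`. -/
def BCP (X : Set G) (P : ι → Subgroup G) : Prop :=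
  ∀ lam : ℝ, 1 ≤ lam → ∃ ε : ℕ, ∀ p q : List G,
    IsRelPath X P p → IsRelPath X P q → NonBacktracking P p → NonBacktracking P q →
    IsQG X P lam p → IsQG X P lam q →
    vtx p 0 = vtx q 0 → vtx p (p.length - 1) = vtx q (q.length - 1) →
    ∀ i j j', IsComponent P p i j j' →
      ((¬∃ m m', IsComponent P q i m m' ∧ (vtx p j)⁻¹ * vtx q m ∈ P i) →
        wdist X (vtx p j) (vtx p (j' + 1)) < ε) ∧
      (∀ m m', IsComponent P q i m m' → (vtx p j)⁻¹ * vtx q m ∈ P i →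
        wdist X (vtx p j) (vtx q m) < ε ∧
          wdist X (vtx p (j' + 1)) (vtx q (m' + 1)) < ε)

/-- The Gromov product on `(G, wdist S)`. -/
noncomputable def gromovProd (S : Set G) (w x y : G) : ℝ :=
  ((wdist S w x : ℤ) + (wdist S w y : ℤ) - (wdist S x y : ℤ) : ℤ) / 2

/-- Gromov hyperbolicity of the relative Cayley graph via the four-point condition. -/
def Hyp4 (S : Set G) : Prop :=
  ∃ δ : ℝ, ∀ w x y z : G,
    min (gromovProd S w x y) (gromovProd S w y z) - δ ≤ gromovProd S w x z

/-- `(G, 𝔓)` is relatively hyperbolic with respect to the finite symmetric generating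
set `X`: the relative Cayley graph is hyperbolic and the BCP property holds. -/
def RelHypPair (X : Set G) (P : ι → Subgroup G) : Prop :=
  X.Finite ∧ (∀ x ∈ X, x⁻¹ ∈ X) ∧ Subgroup.closure X = ⊤ ∧
    Hyp4 (relGen X P) ∧ BCP X P

end RelHyp

/-! ### wdist lemmas -/

section Wdist

variable {G : Type*} [Group G] {X : Set G}

def wset (X : Set G) (u v : G) : Set ℕ :=
  {n | ∃ l : List G, l.length = n ∧ (∀ x ∈ l, x ∈ X) ∧ l.prod = u⁻¹ * v}

lemma wdist_eq_sInf (u v : G) : wdist X u v = sInf (wset X u v) := rfl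

lemma wset_nonempty (hsym : ∀ x ∈ X, x⁻¹ ∈ X) (hcl : Subgroup.closure X = ⊤)
    (u v : G) : (wset X u v).Nonempty := by
  suffices h : ∀ w : G, ∃ l : List G, (∀ x ∈ l, x ∈ X) ∧ l.prod = w by
    obtain ⟨l, hl, hp⟩ := h (u⁻¹ * v)
    exact ⟨l.length, l, rfl, hl, hp⟩
  intro w
  have hw : w ∈ Subgroup.closure X := by rw [hcl]; trivial
  induction hw using Subgroup.closure_induction with
  | mem x hx => exact ⟨[x], by simpa using hx, by simp⟩
  | one => exact ⟨[], by simp, by simp⟩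
  | mul x y _ _ hx hy =>
    obtain ⟨l1, h1, p1⟩ := hx; obtain ⟨l2, h2, p2⟩ := hy
    refine ⟨l1 ++ l2, ?_, by simp [p1, p2]⟩
    intro t ht; rcases List.mem_append.1 ht with h | h
    exacts [h1 t h, h2 t h]
  | inv x _ hx =>
    obtain ⟨l, h1, p1⟩ := hx
    refine ⟨(l.reverse).map (·⁻¹), ?_, ?_⟩
    · intro t ht
      simp only [List.mem_map, List.mem_reverse] at ht
      obtain ⟨a, ha, rfl⟩ := ht
      exact hsym a (h1 a ha)
    · have : (List.map (fun x => x⁻¹) l.reverse).prod = l.prod⁻¹ := by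
        rw [List.map_reverse, ← List.prod_inv_reverse]
      rw [this, p1]

lemma wdist_spec (hsym : ∀ x ∈ X, x⁻¹ ∈ X) (hcl : Subgroup.closure X = ⊤)
    (u v : G) : ∃ l : List G, l.length = wdist X u v ∧ (∀ x ∈ l, x ∈ X) ∧
      l.prod = u⁻¹ * v :=
  Nat.sInf_mem (wset_nonempty hsym hcl u v)

lemma wdist_le {u v : G} {l : List G} (hl : ∀ x ∈ l, x ∈ X) (hp : l.prod = u⁻¹ * v)
    {n : ℕ} (hn : l.length ≤ n) : wdist X u v ≤ n :=
  le_trans (Nat.sInf_le ⟨l, rfl, hl, hp⟩) hn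

lemma wdist_self (u : G) : wdist X u u = 0 :=
  Nat.eq_zero_of_le_zero (wdist_le (l := []) (by simp) (by simp) le_rfl)

lemma wdist_triangle (hsym : ∀ x ∈ X, x⁻¹ ∈ X) (hcl : Subgroup.closure X = ⊤)
    (u v w : G) : wdist X u w ≤ wdist X u v + wdist X v w := by
  obtain ⟨l1, hn1, h1, p1⟩ := wdist_spec hsym hcl u v
  obtain ⟨l2, hn2, h2, p2⟩ := wdist_spec hsym hcl v w
  refine wdist_le (l := l1 ++ l2) ?_ ?_ (by simp [hn1, hn2])
  · intro t ht; rcases List.mem_append.1 ht with h | h; exacts [h1 t h, h2 t h]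
  · simp [p1, p2, mul_assoc]

lemma wdist_symm (hsym : ∀ x ∈ X, x⁻¹ ∈ X) (hcl : Subgroup.closure X = ⊤)
    (u v : G) : wdist X u v = wdist X v u := by
  have key : ∀ a b : G, wdist X a b ≤ wdist X b a := by
    intro a b
    obtain ⟨l, hn, h1, p1⟩ := wdist_spec hsym hcl b a
    refine wdist_le (l := (l.reverse).map (·⁻¹)) ?_ ?_ (by simp [hn])
    · intro t ht
      simp only [List.mem_map, List.mem_reverse] at ht
      obtain ⟨c, hc, rfl⟩ := ht
      exact hsym c (h1 c hc)
    · have : (List.map (fun x => x⁻¹) l.reverse).prod = l.prod⁻¹ := by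
        rw [List.map_reverse, ← List.prod_inv_reverse]
      rw [this, p1]; group
  exact le_antisymm (key u v) (key v u)

lemma wdist_le_one {u v : G} (h : u⁻¹ * v ∈ X) : wdist X u v ≤ 1 :=
  wdist_le (l := [u⁻¹ * v]) (by simpa using h) (by simp) (by simp)

end Wdist

/-! ### Function-based path framework -/

section FunPath

variable {G : Type*} [Group G] {ι : Type*}

def PathOK (X : Set G) (P : ι → Subgroup G) (f : ℕ → G) (m : ℕ) : Prop :=
  ∀ j, j < m → f j ≠ f (j+1) ∧ ((f j)⁻¹ * f (j+1) ∈ X ∨ ∃ i, (f j)⁻¹ * f (j+1) ∈ P i)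

def TautF (X : Set G) (P : ι → Subgroup G) (ν : ℕ) (f : ℕ → G) (m : ℕ) : Prop :=
  ∀ i a b, a < b → b < m → (f a)⁻¹ * f (a+1) ∈ P i → (f b)⁻¹ * f (b+1) ∈ P i →
    (f a)⁻¹ * f b ∈ P i →
    min (wdist X (f a) (f (a+1))) (wdist X (f b) (f (b+1))) < ν

noncomputable def lenXseg (X : Set G) (f : ℕ → G) (a b : ℕ) : ℕ :=
  ∑ j ∈ Finset.Ico a b, wdist X (f j) (f (j+1))

def MsegSet (X : Set G) (P : ι → Subgroup G) (f : ℕ → G) (m : ℕ) (g : G) (i : ι) :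
    Set ℕ :=
  {x | ∃ j, j < m ∧ g⁻¹ * f j ∈ P i ∧ g⁻¹ * f (j+1) ∈ P i ∧
    wdist X (f j) (f (j+1)) = x}

noncomputable def Mseg (X : Set G) (P : ι → Subgroup G) (f : ℕ → G) (m : ℕ) (g : G)
    (i : ι) : ℕ := sSup (MsegSet X P f m g i)

variable {X : Set G} {P : ι → Subgroup G}

lemma lenXseg_concat {f : ℕ → G} {a b c : ℕ} (hab : a ≤ b) (hbc : b ≤ c) :
    lenXseg X f a b + lenXseg X f b c = lenXseg X f a c :=
  Finset.sum_Ico_consecutive _ hab hbc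

lemma lenXseg_mono {f : ℕ → G} {a b c d : ℕ} (hca : c ≤ a) (hbd : b ≤ d) :
    lenXseg X f a b ≤ lenXseg X f c d := by
  rcases le_or_gt a b with h | h
  · exact Finset.sum_le_sum_of_subset (Finset.Ico_subset_Ico hca hbd)
  · simp [lenXseg, Finset.Ico_eq_empty_of_le h.le]

lemma dist_le_lenXseg (hsym : ∀ x ∈ X, x⁻¹ ∈ X) (hcl : Subgroup.closure X = ⊤)
    {f : ℕ → G} {a b : ℕ} (hab : a ≤ b) :
    wdist X (f a) (f b) ≤ lenXseg X f a b := by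
  induction b, hab using Nat.le_induction with
  | base => simp [wdist_self, lenXseg]
  | succ b hb ih =>
    calc wdist X (f a) (f (b+1)) ≤ wdist X (f a) (f b) + wdist X (f b) (f (b+1)) :=
          wdist_triangle hsym hcl _ _ _
    _ ≤ lenXseg X f a b + wdist X (f b) (f (b+1)) := by omega
    _ = lenXseg X f a (b+1) := by
        rw [← lenXseg_concat hb (Nat.le_succ b)]
        simp [lenXseg]

lemma lenXseg_single (f : ℕ → G) (a : ℕ) :
    lenXseg X f a (a+1) = wdist X (f a) (f (a+1)) := by
  simp [lenXseg]

lemma MsegSet_bddAbove (f : ℕ → G) (m : ℕ) (g : G) (i : ι) :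
    BddAbove (MsegSet X P f m g i) := by
  refine ⟨(Finset.range m).sup (fun j => wdist X (f j) (f (j+1))), ?_⟩
  rintro x ⟨j, hj, -, -, rfl⟩
  exact Finset.le_sup (f := fun k => wdist X (f k) (f (k+1))) (Finset.mem_range.2 hj)

lemma Mseg_le_of_forall {f : ℕ → G} {m : ℕ} {g : G} {i : ι} {C : ℕ}
    (h : ∀ j, j < m → g⁻¹ * f j ∈ P i → g⁻¹ * f (j+1) ∈ P i →
      wdist X (f j) (f (j+1)) ≤ C) : Mseg X P f m g i ≤ C := by
  rcases Set.eq_empty_or_nonempty (MsegSet X P f m g i) with he | hne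
  · rw [Mseg, he, csSup_empty]; exact Nat.zero_le C
  · refine csSup_le hne ?_
    rintro x ⟨j, hj, h1, h2, rfl⟩
    exact h j hj h1 h2

lemma Mseg_mem {f : ℕ → G} {m : ℕ} {g : G} {i : ι}
    (hne : (MsegSet X P f m g i).Nonempty) :
    Mseg X P f m g i ∈ MsegSet X P f m g i :=
  Nat.sSup_mem hne (MsegSet_bddAbove f m g i)

lemma le_Mseg {f : ℕ → G} {m : ℕ} {g : G} {i : ι} {x : ℕ}
    (hx : x ∈ MsegSet X P f m g i) : x ≤ Mseg X P f m g i :=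
  le_csSup (MsegSet_bddAbove f m g i) hx

lemma Mseg_coset_congr {f : ℕ → G} {m : ℕ} {g g' : G} {i : ι}
    (h : g⁻¹ * g' ∈ P i) : Mseg X P f m g i = Mseg X P f m g' i := by
  have key : ∀ u w : G, u⁻¹ * w ∈ P i → MsegSet X P f m u i ⊆ MsegSet X P f m w i := by
    rintro u w huw x ⟨j, hj, h1, h2, rfl⟩
    refine ⟨j, hj, ?_, ?_, rfl⟩
    · have := (P i).mul_mem ((P i).inv_mem huw) h1
      simpa [mul_assoc] using this
    · have := (P i).mul_mem ((P i).inv_mem huw) h2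
      simpa [mul_assoc] using this
  have h2 : g'⁻¹ * g ∈ P i := by
    have := (P i).inv_mem h
    simpa using this
  have e : MsegSet X P f m g i = MsegSet X P f m g' i :=
    le_antisymm (key g g' h) (key g' g h2)
  rw [Mseg, e, Mseg]

end FunPath

/-! ### Reduction to non-backtracking paths -/

section Surg

variable {G : Type*} [Group G] {ι : Type*} {X : Set G} {P : ι → Subgroup G}

/-- Functional version of non-backtracking. -/
def NBF (P : ι → Subgroup G) (u : ℕ → G) (r : ℕ) : Prop :=
  ∀ i j j' k, j < j' → j' < r → (u j)⁻¹ * u (j+1) ∈ P i → (u j')⁻¹ * u (j'+1) ∈ P i →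
    (u j)⁻¹ * u j' ∈ P i → j ≤ k → k ≤ j' → (u k)⁻¹ * u (k+1) ∈ P i

def Wit (P : ι → Subgroup G) (f : ℕ → G) (m : ℕ) (a c : ℕ) : Prop :=
  ∃ a' c', a ≤ a' ∧ a' < c' ∧ c' ≤ c ∧ f a' = f a ∧ f c' = f c ∧
    (c' = a' + 1 ∨ ∃ i, (f a')⁻¹ * f c' ∈ P i) ∧ (0 < a' ∨ c' < m)

def Good (P : ι → Subgroup G) (f : ℕ → G) (m : ℕ) (b : ℕ → ℕ) (r : ℕ) : Prop :=
  0 < r ∧ b 0 = 0 ∧ b r ≤ m ∧ f (b r) = f m ∧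
    ∀ t, t < r → (b t < b (t+1) ∧ f (b t) ≠ f (b (t+1)) ∧ Wit P f m (b t) (b (t+1)))

lemma Good.bmono {f : ℕ → G} {m : ℕ} {b : ℕ → ℕ} {r : ℕ} (hb : Good P f m b r)
    {t t' : ℕ} (h : t < t') (h' : t' ≤ r) : b t < b t' := by
  induction t', h using Nat.le_induction with
  | base => exact (hb.2.2.2.2 t (by omega)).1
  | succ t' ht ih =>
    exact lt_trans (ih (by omega)) (hb.2.2.2.2 t' (by omega)).1

lemma Good.bmono' {f : ℕ → G} {m : ℕ} {b : ℕ → ℕ} {r : ℕ} (hb : Good P f m b r)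
    {t t' : ℕ} (h : t ≤ t') (h' : t' ≤ r) : b t ≤ b t' := by
  rcases Nat.eq_or_lt_of_le h with rfl | h
  · exact le_rfl
  · exact (hb.bmono h h').le

lemma Good.b_le_m {f : ℕ → G} {m : ℕ} {b : ℕ → ℕ} {r : ℕ} (hb : Good P f m b r)
    {t : ℕ} (h : t ≤ r) : b t ≤ m :=
  le_trans (hb.bmono' h le_rfl) hb.2.2.1

lemma Good.init (f : ℕ → G) (m : ℕ) (hm : 2 ≤ m) (hf : PathOK X P f m) :
    Good P f m id m := by
  refine ⟨by omega, rfl, le_rfl, rfl, ?_⟩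
  intro t ht
  refine ⟨Nat.lt_succ_self t, (hf t ht).1, t, t+1, le_rfl, Nat.lt_succ_self t, le_rfl,
    rfl, rfl, Or.inl rfl, by omega⟩

lemma surg (f : ℕ → G) (m : ℕ) :
    ∀ r, ∀ b, Good P f m b r →
      ∃ r' b', Good P f m b' r' ∧ NBF P (fun t => f (b' t)) r' := by
  intro r
  induction r using Nat.strong_induction_on with
  | _ r IH =>
  intro b hb
  by_cases hnb : NBF P (fun t => f (b t)) r
  · exact ⟨r, b, hb, hnb⟩
  · have hex : ∃ i j j' k, j < j' ∧ j' < r ∧ (f (b j))⁻¹ * f (b (j+1)) ∈ P i ∧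
        (f (b j'))⁻¹ * f (b (j'+1)) ∈ P i ∧ (f (b j))⁻¹ * f (b j') ∈ P i ∧
        j ≤ k ∧ k ≤ j' ∧ ¬ ((f (b k))⁻¹ * f (b (k+1)) ∈ P i) := by
      by_contra hcon
      push_neg at hcon
      exact hnb fun i j j' k h1 h2 h3 h4 h5 h6 h7 =>
        hcon i j j' k h1 h2 h3 h4 h5 h6 h7
    obtain ⟨i, j, j', k, hjj, hjr, hEj, hEj', hC, hk1, hk2, hEk⟩ := hex
    have hkj : j < k := by
      rcases Nat.eq_or_lt_of_le hk1 with rfl | h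
      · exact absurd hEj hEk
      · exact h
    have hkj' : k < j' := by
      rcases Nat.eq_or_lt_of_le hk2 with rfl | h
      · exact absurd hEj' hEk
      · exact h
    have hgap : j + 2 ≤ j' := by omega
    have hb0 : b 0 = 0 := hb.2.1
    by_cases hsp : j = 0 ∧ j' = r - 1
    · -- special case: the pair spans the whole path
      obtain ⟨rfl, hj'⟩ := hsp
      subst hj'
      have hr3 : 3 ≤ r := by omega
      have hlast1 : r - 1 + 1 = r := by omega
      have hlastp := hb.2.2.2.2 (r-1) (by omega)
      rw [hlast1] at hlastp
      have hbpos : 0 < b (r-1) := by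
        have := hb.bmono (t := 0) (t' := r-1) (by omega) (by omega)
        omega
      have hbrm : b r ≤ m := hb.2.2.1
      have hbrr : b (r-1) < b r := hlastp.1
      by_cases h0 : f (b 0) = f (b (r-1))
      · -- collapse to a single edge
        refine IH 1 (by omega) (fun t => Nat.rec 0 (fun _ _ => b r) t) ?_
        refine ⟨one_pos, rfl, hbrm, hb.2.2.2.1, ?_⟩
        intro t ht
        have ht0 : t = 0 := by omega
        subst ht0
        obtain ⟨a', c', ha1, ha2, ha3, ha4, ha5, ha6, -⟩ := hlastp.2.2
        have hapos : 0 < a' := by omega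
        refine ⟨?_, ?_, ?_⟩
        · show 0 < b r
          omega
        · show f 0 ≠ f (b r)
          rw [← hb0, h0]
          exact hlastp.2.1
        · show Wit P f m 0 (b r)
          refine ⟨a', c', by omega, ha2, ha3, ?_, ha5, ha6, Or.inl hapos⟩
          show f a' = f 0
          rw [ha4, ← h0, hb0]
      · -- keep the last edge
        refine IH 2 (by omega)
          (fun t => Nat.rec 0 (fun t' _ => Nat.rec (b (r-1)) (fun _ _ => b r) t') t) ?_
        refine ⟨two_pos, rfl, hbrm, hb.2.2.2.1, ?_⟩
        intro t ht
        interval_cases t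
        · refine ⟨?_, ?_, ?_⟩
          · show 0 < b (r-1); exact hbpos
          · show f 0 ≠ f (b (r-1)); rw [← hb0]; exact h0
          · show Wit P f m 0 (b (r-1))
            refine ⟨0, b (r-1), le_rfl, hbpos, le_rfl, rfl, rfl, ?_, Or.inr (by omega)⟩
            refine Or.inr ⟨i, ?_⟩
            show (f 0)⁻¹ * f (b (r-1)) ∈ P i
            rw [← hb0]
            exact hC
        · exact hlastp
    · -- generic case
      have hj'r : j = 0 → j' + 1 ≤ r - 1 := by
        intro hj0
        rcases not_and_or.1 hsp with h | h
        · exact absurd hj0 h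
        · omega
      by_cases heq : f (b j) = f (b (j'+1))
      · by_cases hjr2 : j' + 1 < r
        · -- drop the segment [j, j'+1] keeping the vertex b j
          set d2 := j' + 1 - j with hd2
          refine IH (r - d2) (by omega) (fun t => if t ≤ j then b t else b (t + d2)) ?_
          obtain ⟨a', c', ha1, ha2, ha3, ha4, ha5, ha6, ha7⟩ :=
            (hb.2.2.2.2 (j'+1) hjr2).2.2
          have hrr : ¬ (r - d2 ≤ j) := by omega
          refine ⟨by omega, by simp [hb0], ?_, ?_, ?_⟩
          · simp only [if_neg hrr]
            have hh : r - d2 + d2 = r := by omega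
            rw [hh]; exact hb.2.2.1
          · simp only [if_neg hrr]
            have hh : r - d2 + d2 = r := by omega
            rw [hh]; exact hb.2.2.2.1
          · intro t ht
            rcases lt_trichotomy t j with h | hteq | h
            · have h1 : t ≤ j := by omega
              have h2 : t + 1 ≤ j := by omega
              simp only [if_pos h1, if_pos h2]
              exact hb.2.2.2.2 t (by omega)
            · subst hteq
              have h1 : ¬ (t + 1 ≤ t) := by omega
              simp only [if_pos le_rfl, if_neg h1]
              have hj1 : t + 1 + d2 = j' + 2 := by omega
              rw [hj1]
              have hmono : b t < b (j' + 2) := hb.bmono (by omega) (by omega)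
              have hne2 := (hb.2.2.2.2 (j'+1) hjr2).2.1
              refine ⟨hmono, by rw [heq]; exact hne2, ?_⟩
              refine ⟨a', c', ?_, ha2, ha3, by rw [ha4, ← heq], ha5, ha6, ha7⟩
              have : b t ≤ b (j'+1) := hb.bmono' (by omega) (by omega)
              omega
            · have h1 : ¬ (t ≤ j) := by omega
              have h2 : ¬ (t + 1 ≤ j) := by omega
              simp only [if_neg h1, if_neg h2]
              have hh : t + 1 + d2 = t + d2 + 1 := by omega
              rw [hh]
              exact hb.2.2.2.2 (t + d2) (by omega)
        · -- truncate: j' + 1 = r, j ≥ 1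
          have hj1 : 1 ≤ j := by
            by_contra hcon
            have h0' : j = 0 := by omega
            have := hj'r h0'
            omega
          have hjr' : j' + 1 = r := by omega
          refine IH j (by omega) b ?_
          refine ⟨by omega, hb0, hb.b_le_m (by omega), ?_, ?_⟩
          · rw [heq, hjr', hb.2.2.2.1]
          · intro t ht
            exact hb.2.2.2.2 t (by omega)
      · -- shortcut the segment [j, j'+1]
        set d := j' - j with hd
        refine IH (r - d) (by omega) (fun t => if t ≤ j then b t else b (t + d)) ?_
        have hrr : ¬ (r - d ≤ j) := by omega
        refine ⟨by omega, by simp [hb0], ?_, ?_, ?_⟩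
        · simp only [if_neg hrr]
          have hh : r - d + d = r := by omega
          rw [hh]; exact hb.2.2.1
        · simp only [if_neg hrr]
          have hh : r - d + d = r := by omega
          rw [hh]; exact hb.2.2.2.1
        · intro t ht
          rcases lt_trichotomy t j with h | hteq | h
          · have h1 : t ≤ j := by omega
            have h2 : t + 1 ≤ j := by omega
            simp only [if_pos h1, if_pos h2]
            exact hb.2.2.2.2 t (by omega)
          · subst hteq
            have h1 : ¬ (t + 1 ≤ t) := by omega
            simp only [if_pos le_rfl, if_neg h1]
            have hj1 : t + 1 + d = j' + 1 := by omega
            rw [hj1]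
            have hmono : b t < b (j' + 1) := hb.bmono (by omega) (by omega)
            refine ⟨hmono, heq, ?_⟩
            refine ⟨b t, b (j'+1), le_rfl, hmono, le_rfl, rfl, rfl, ?_, ?_⟩
            · exact Or.inr ⟨i, by simpa [mul_assoc] using (P i).mul_mem hC hEj'⟩
            · rcases Nat.eq_zero_or_pos (b t) with hbt | hbt
              · right
                have h0' : t = 0 := by
                  by_contra hcon
                  have := hb.bmono (t := 0) (t' := t) (by omega) (by omega)
                  omega
                subst h0'
                have := hj'r rfl
                have h2 : b (j'+1) ≤ b (r-1) := hb.bmono' (by omega) (by omega)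
                have h3 : b (r-1) < b r := hb.bmono (by omega) le_rfl
                have := hb.2.2.1
                omega
              · exact Or.inl hbt
          · have h1 : ¬ (t ≤ j) := by omega
            have h2 : ¬ (t + 1 ≤ j) := by omega
            simp only [if_neg h1, if_neg h2]
            have hh : t + 1 + d = t + d + 1 := by omega
            rw [hh]
            exact hb.2.2.2.2 (t + d) (by omega)

end Surg

/-! ### Lists from functions, components -/

section Conv

variable {G : Type*} [Group G] {ι : Type*} {X : Set G} {P : ι → Subgroup G}

def Lof (u : ℕ → G) (r : ℕ) : List G := List.ofFn (fun t : Fin (r+1) => u t.1)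

@[simp] lemma Lof_length (u : ℕ → G) (r : ℕ) : (Lof u r).length = r + 1 := by
  simp [Lof]

lemma vtx_Lof (u : ℕ → G) (r : ℕ) {a : ℕ} (h : a ≤ r) : vtx (Lof u r) a = u a := by
  have hlt : a < (Lof u r).length := by simp; omega
  rw [vtx, List.getD_eq_getElem _ _ hlt]
  simp only [Lof, List.getElem_ofFn]

lemma Lof_ne_nil (u : ℕ → G) (r : ℕ) : Lof u r ≠ [] := by
  intro h
  have := congrArg List.length h
  simp at this

lemma isPEdge_Lof (u : ℕ → G) (r : ℕ) (i : ι) (j : ℕ) :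
    IsPEdge P (Lof u r) i j ↔ (j < r ∧ (u j)⁻¹ * u (j+1) ∈ P i) := by
  constructor
  · rintro ⟨h1, h2⟩
    simp only [Lof_length] at h1
    have hj : j < r := by omega
    rw [vtx_Lof u r (by omega), vtx_Lof u r (by omega)] at h2
    exact ⟨hj, h2⟩
  · rintro ⟨h1, h2⟩
    refine ⟨by simp; omega, ?_⟩
    rw [vtx_Lof u r (by omega), vtx_Lof u r (by omega)]
    exact h2

lemma isRelPath_Lof {u : ℕ → G} {r : ℕ}
    (hdist : ∀ t, t < r → u t ≠ u (t+1))
    (hlab : ∀ t, t < r → ((u t)⁻¹ * u (t+1) ∈ X ∨ ∃ i, (u t)⁻¹ * u (t+1) ∈ P i)) :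
    IsRelPath X P (Lof u r) := by
  refine ⟨Lof_ne_nil u r, ?_⟩
  rw [List.Chain', List.isChain_iff_getElem]
  intro t ht
  simp only [Lof_length] at ht
  have h1 : (Lof u r)[t]'(by simp; omega) = u t := by
    simp only [Lof, List.get_eq_getElem, List.getElem_ofFn]
  have h2 : (Lof u r)[t+1]'(by simp; omega) = u (t+1) := by
    simp only [Lof, List.get_eq_getElem, List.getElem_ofFn]
  rw [h1, h2]
  exact ⟨hdist t (by omega), hlab t (by omega)⟩

lemma nonBacktracking_Lof {u : ℕ → G} {r : ℕ} (h : NBF P u r) :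
    NonBacktracking P (Lof u r) := by
  intro i j j' hjj hEj hEj' hC k hk1 hk2
  rw [isPEdge_Lof] at hEj hEj' ⊢
  rw [SameCoset, vtx_Lof u r (by omega), vtx_Lof u r (by omega)] at hC
  exact ⟨by omega, h i j j' k hjj hEj'.1 hEj.2 hEj'.2 hC hk1 hk2⟩

lemma isQG_short {p : List G} {lam : ℝ} (hlam : 0 ≤ lam)
    (h : (p.length : ℝ) ≤ lam + 1) : IsQG X P lam p := by
  intro a b hab hb
  have h1 : (b : ℝ) ≤ (p.length : ℝ) - 1 := by
    have : (b : ℝ) + 1 ≤ (p.length : ℝ) := by exact_mod_cast hb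
    linarith
  have h2 : (0:ℝ) ≤ lam * (wdist (relGen X P) (vtx p a) (vtx p b) : ℝ) :=
    mul_nonneg hlam (by positivity)
  have h3 : (0:ℝ) ≤ (a : ℝ) := by positivity
  linarith

/-- Existence of the maximal component through a peripheral edge. -/
lemma comp_exists (u : ℕ → G) (r : ℕ) (i : ι) {t : ℕ} (ht : t < r)
    (hE : (u t)⁻¹ * u (t+1) ∈ P i) :
    ∃ a c, a ≤ t ∧ t ≤ c ∧ c < r ∧
      (∀ k, a ≤ k → k ≤ c → (u k)⁻¹ * u (k+1) ∈ P i) ∧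
      (c + 1 < r → ¬ ((u (c+1))⁻¹ * u (c+2) ∈ P i)) ∧
      (a = 0 ∨ ¬ ((u (a-1))⁻¹ * u a ∈ P i)) := by
  classical
  set S : Set ℕ := {a | a ≤ t ∧ ∀ k, a ≤ k → k ≤ t → (u k)⁻¹ * u (k+1) ∈ P i} with hS
  have htS : t ∈ S := ⟨le_rfl, fun k hk1 hk2 => by
    have : k = t := by omega
    subst this; exact hE⟩
  have hSne : S.Nonempty := ⟨t, htS⟩
  set a := sInf S with ha
  have haS : a ∈ S := Nat.sInf_mem hSne
  set T : Set ℕ := {c | c < r ∧ ∀ k, t ≤ k → k ≤ c → (u k)⁻¹ * u (k+1) ∈ P i} with hT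
  have htT : t ∈ T := ⟨ht, fun k hk1 hk2 => by
    have : k = t := by omega
    subst this; exact hE⟩
  have hTbdd : BddAbove T := ⟨r, fun c hc => hc.1.le⟩
  set c := sSup T with hc
  have hcT : c ∈ T := Nat.sSup_mem ⟨t, htT⟩ hTbdd
  have htc : t ≤ c := le_csSup hTbdd htT
  refine ⟨a, c, haS.1, htc, hcT.1, ?_, ?_, ?_⟩
  · intro k hk1 hk2
    rcases le_or_gt k t with h | h
    · rcases lt_or_ge k t with h' | h'
      · exact haS.2 k hk1 (by omega)
      · have : k = t := by omega
        subst this; exact hE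
    · exact hcT.2 k (by omega) hk2
  · intro hcr hbad
    have : c + 1 ∈ T := by
      refine ⟨hcr, fun k hk1 hk2 => ?_⟩
      rcases le_or_gt k c with h | h
      · exact hcT.2 k hk1 h
      · have : k = c + 1 := by omega
        subst this
        simpa using hbad
    have h5 := le_csSup hTbdd this
    rw [← hc] at h5
    omega
  · rcases Nat.eq_zero_or_pos a with h | h
    · exact Or.inl h
    · right
      intro hbad
      have hat := haS.1
      have : a - 1 ∈ S := by
        refine ⟨by omega, fun k hk1 hk2 => ?_⟩
        rcases Nat.lt_or_ge k a with h' | h'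
        · have : k = a - 1 := by omega
          subst this
          have h2 : a - 1 + 1 = a := by omega
          rwa [h2]
        · exact haS.2 k h' hk2
      have h5 := Nat.sInf_le this
      rw [← ha] at h5
      omega

lemma comp_coset {u : ℕ → G} {i : ι} {a c : ℕ}
    (h : ∀ k, a ≤ k → k ≤ c → (u k)⁻¹ * u (k+1) ∈ P i) :
    ∀ k, a ≤ k → k ≤ c + 1 → (u a)⁻¹ * u k ∈ P i := by
  intro k hk1 hk2
  induction k, hk1 using Nat.le_induction with
  | base => simpa using (P i).one_mem
  | succ k hk ih =>
    have h1 : (u a)⁻¹ * u k ∈ P i := ih (by omega)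
    have h2 : (u k)⁻¹ * u (k+1) ∈ P i := h k hk (by omega)
    simpa [mul_assoc] using (P i).mul_mem h1 h2

lemma isComponent_Lof {u : ℕ → G} {r : ℕ} {i : ι} {a c : ℕ} (hc : c < r)
    (hedges : ∀ k, a ≤ k → k ≤ c → (u k)⁻¹ * u (k+1) ∈ P i)
    (hac : a ≤ c)
    (hmax1 : c + 1 < r → ¬ ((u (c+1))⁻¹ * u (c+2) ∈ P i))
    (hmax2 : a = 0 ∨ ¬ ((u (a-1))⁻¹ * u a ∈ P i)) :
    IsComponent P (Lof u r) i a c := by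
  refine ⟨hac, ?_, ?_, ?_⟩
  · intro k hk1 hk2
    exact (isPEdge_Lof u r i k).2 ⟨by omega, hedges k hk1 hk2⟩
  · intro hbad
    rw [isPEdge_Lof] at hbad
    rcases lt_or_ge (c+1) r with h | h
    · exact hmax1 h hbad.2
    · omega
  · rcases Nat.eq_zero_or_pos a with h0 | h0
    · exact Or.inl h0
    · rcases hmax2 with h | h
      · exact Or.inl h
      · right
        intro hbad
        rw [isPEdge_Lof] at hbad
        have e : a - 1 + 1 = a := by omega
        rw [e] at hbad
        exact h hbad.2

/-- The two-vertex path. -/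
lemma isRelPath_pair {v w : G} (hvw : v ≠ w)
    (h : v⁻¹ * w ∈ X ∨ ∃ i, v⁻¹ * w ∈ P i) : IsRelPath X P [v, w] := by
  exact ⟨by simp, List.isChain_pair.2 ⟨hvw, h⟩⟩

lemma vtx_pair0 (v w : G) : vtx [v, w] 0 = v := rfl
lemma vtx_pair1 (v w : G) : vtx [v, w] 1 = w := rfl

lemma nonBacktracking_pair (v w : G) : NonBacktracking P [v, w] := by
  intro i j j' hjj hEj hEj' hC k hk1 hk2
  obtain ⟨h1, -⟩ := hEj
  obtain ⟨h2, -⟩ := hEj'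
  simp at h1 h2
  omega

lemma nonBacktracking_single (v : G) : NonBacktracking P [v] := by
  intro i j j' hjj hEj hEj' hC k hk1 hk2
  obtain ⟨h1, -⟩ := hEj
  simp at h1

lemma isRelPath_single (v : G) : IsRelPath X P [v] := ⟨by simp, List.isChain_singleton _⟩

lemma isComponent_pair {v w : G} {i : ι} (h : v⁻¹ * w ∈ P i) :
    IsComponent P [v, w] i 0 0 := by
  refine ⟨le_rfl, ?_, ?_, Or.inl rfl⟩
  · intro k hk1 hk2
    have : k = 0 := by omega
    subst this
    exact ⟨by simp, h⟩
  · rintro ⟨h1, -⟩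
    simp at h1

lemma component_pair_eq {v w : G} {i : ι} {a c : ℕ}
    (h : IsComponent P [v, w] i a c) : a = 0 ∧ c = 0 := by
  obtain ⟨hac, hedges, -, -⟩ := h
  have h1 := hedges a le_rfl hac
  have h2 := hedges c hac le_rfl
  obtain ⟨hb1, -⟩ := h1
  obtain ⟨hb2, -⟩ := h2
  simp at hb1 hb2
  omega

lemma component_single {v : G} {i : ι} {a c : ℕ} (h : IsComponent P [v] i a c) :
    False := by
  obtain ⟨hac, hedges, -, -⟩ := h
  obtain ⟨hb1, -⟩ := hedges a le_rfl hac
  simp at hb1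

end Conv

/-! ### Bounding the distance between endpoints in a common coset -/

section Endpt

variable {G : Type*} [Group G] {ι : Type*} {X : Set G} {P : ι → Subgroup G}

lemma Good.le_b {f : ℕ → G} {m : ℕ} {b : ℕ → ℕ} {r : ℕ} (hb : Good P f m b r)
    {t : ℕ} (h : t ≤ r) : t ≤ b t := by
  induction t with
  | zero => omega
  | succ t ih =>
    have h1 := ih (by omega)
    have h2 : b t < b (t+1) := (hb.2.2.2.2 t (by omega)).1
    omega

lemma Good.r_le_m {f : ℕ → G} {m : ℕ} {b : ℕ → ℕ} {r : ℕ} (hb : Good P f m b r) :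
    r ≤ m := le_trans (hb.le_b le_rfl) hb.2.2.1

lemma PathOK.mono {f : ℕ → G} {m m' : ℕ} (h : PathOK X P f m) (hm : m' ≤ m) :
    PathOK X P f m' := fun j hj => h j (by omega)

lemma PathOK.shift {f : ℕ → G} {m : ℕ} (h : PathOK X P f m) {a m' : ℕ}
    (hm : a + m' ≤ m) : PathOK X P (fun t => f (a + t)) m' := fun j hj =>
  h (a + j) (by omega)

lemma TautF.shift {ν : ℕ} {f : ℕ → G} {m : ℕ} (h : TautF X P ν f m) {a m' : ℕ}
    (hm : a + m' ≤ m) : TautF X P ν (fun t => f (a + t)) m' := by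
  intro i x y hxy hy hEx hEy hCxy
  exact h i (a + x) (a + y) (by omega) (by omega) hEx hEy hCxy

lemma labels_of_good {f : ℕ → G} {m : ℕ} {b : ℕ → ℕ} {r : ℕ}
    (hb : Good P f m b r) (hf : PathOK X P f m) :
    ∀ t, t < r → ((f (b t))⁻¹ * f (b (t+1)) ∈ X ∨
      ∃ i, (f (b t))⁻¹ * f (b (t+1)) ∈ P i) := by
  intro t ht
  obtain ⟨a', c', ha1, ha2, ha3, ha4, ha5, ha6, -⟩ := (hb.2.2.2.2 t ht).2.2
  rw [← ha4, ← ha5]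
  rcases ha6 with h | h
  · subst h
    have ha'm : a' < m := by
      have := hb.b_le_m (t := t+1) (by omega)
      omega
    exact (hf a' ha'm).2
  · exact Or.inr h

/-- Main endpoint lemma: a taut path between two points of a peripheral coset that
has no `P i`-edge meeting the coset has uniformly bounded `X`-length between its
endpoints. -/
lemma endpt (hrel : RelHypPair X P) :
    ∀ n : ℕ, ∃ γ : ℕ, ∀ (f : ℕ → G) (m : ℕ) (g : G) (i : ι),
      m ≤ n → PathOK X P f m →
      g⁻¹ * f 0 ∈ P i → g⁻¹ * f m ∈ P i →
      (∀ j, j < m → ¬((f j)⁻¹ * f (j+1) ∈ P i ∧ g⁻¹ * f j ∈ P i)) →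
      wdist X (f 0) (f m) ≤ γ := by
  obtain ⟨hXfin, hsym, hcl, hhyp, hbcp⟩ := hrel
  intro n
  induction n with
  | zero =>
    refine ⟨0, ?_⟩
    intro f m g i hm _ _ _ _
    have : m = 0 := by omega
    subst this
    simp [wdist_self]
  | succ n IH =>
    obtain ⟨γn, hγn⟩ := IH
    obtain ⟨ε, hε⟩ := hbcp ((n : ℝ) + 2) (by
      have : (0:ℝ) ≤ (n:ℝ) := Nat.cast_nonneg n
      linarith)
    refine ⟨3 * γn + ε + 1, ?_⟩
    intro f m g i hm hf hg0 hgm hno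
    rcases Nat.lt_or_ge m 2 with hm2 | hm2
    · -- m = 0 trivial, m = 1 contradicts the no-edge hypothesis
      interval_cases m
      · simp [wdist_self]
      · exfalso
        refine hno 0 (by omega) ⟨?_, hg0⟩
        have : (f 0)⁻¹ * f 1 = (g⁻¹ * f 0)⁻¹ * (g⁻¹ * f 1) := by group
        rw [this]
        exact (P i).mul_mem ((P i).inv_mem hg0) hgm
    · obtain ⟨r, b, hbGood, hbNB⟩ := surg f m m id (Good.init f m hm2 hf)
      set u : ℕ → G := fun t => f (b t) with hu
      by_cases hfe : f 0 = f m
      · rw [hfe, wdist_self]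
        omega
      · by_cases hper : ∃ k, k < r ∧ (u k)⁻¹ * u (k+1) ∈ P i ∧ g⁻¹ * u k ∈ P i
        · -- some edge of the reduction is a `P i`-edge in the coset; split at it
          obtain ⟨k, hk, hEk, hgk⟩ := hper
          obtain ⟨a', c', ha1, ha2, ha3, ha4, ha5, ha6, ha7⟩ :=
            (hbGood.2.2.2.2 k hk).2.2
          have hga' : g⁻¹ * f a' ∈ P i := by rw [ha4]; exact hgk
          have hgc' : g⁻¹ * f c' ∈ P i := by
            rw [ha5]
            have : g⁻¹ * u (k+1) = (g⁻¹ * u k) * ((u k)⁻¹ * u (k+1)) := by group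
            rw [this]
            exact (P i).mul_mem hgk hEk
          have hc'm : c' ≤ m := le_trans ha3 (hbGood.b_le_m (by omega))
          have hbound : (0 < a' ∨ c' < m) := ha7
          -- piece 1 : from 0 to a'
          have hp1 : wdist X (f 0) (f a') ≤ γn := by
            refine hγn f a' g i (by omega) (hf.mono (by omega)) hg0 hga' ?_
            intro j hj
            exact hno j (by omega)
          -- piece 2 : from a' to c'
          have hp2 : wdist X (f a') (f c') ≤ γn := by
            have hlen : c' - a' ≤ n := by omega
            have := hγn (fun t => f (a' + t)) (c' - a') g i hlen
              (hf.shift (by omega)) (by simpa using hga')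
              (by
                have : a' + (c' - a') = c' := by omega
                simp only [this]
                exact hgc')
              (by
                intro j hj
                have := hno (a' + j) (by omega)
                simpa [← Nat.add_assoc] using this)
            simpa [Nat.add_sub_cancel' ha2.le] using this
          -- piece 3 : from c' to m
          have hp3 : wdist X (f c') (f m) ≤ γn := by
            have hlen : m - c' ≤ n := by omega
            have := hγn (fun t => f (c' + t)) (m - c') g i hlen
              (hf.shift (by omega)) (by simpa using hgc')
              (by
                have : c' + (m - c') = m := by omega
                simp only [this]
                exact hgm)
              (by
                intro j hj
                have := hno (c' + j) (by omega)
                simpa [← Nat.add_assoc] using this)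
            simpa [Nat.add_sub_cancel' hc'm] using this
          calc wdist X (f 0) (f m) ≤ wdist X (f 0) (f a') + wdist X (f a') (f m) :=
                wdist_triangle hsym hcl _ _ _
          _ ≤ wdist X (f 0) (f a') + (wdist X (f a') (f c') + wdist X (f c') (f m)) := by
                have := wdist_triangle hsym hcl (f a') (f c') (f m)
                omega
          _ ≤ 3 * γn + ε + 1 := by omega
        · -- no such edge: apply BCP to see the endpoints are close
          push_neg at hper
          have hw : (f 0)⁻¹ * f m ∈ P i := by
            have : (f 0)⁻¹ * f m = (g⁻¹ * f 0)⁻¹ * (g⁻¹ * f m) := by group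
            rw [this]
            exact (P i).mul_mem ((P i).inv_mem hg0) hgm
          have hu0 : u 0 = f 0 := by rw [hu]; simp [hbGood.2.1]
          have hur : u r = f m := hbGood.2.2.2.1
          have hrn : r ≤ n + 1 := le_trans hbGood.r_le_m hm
          have hQrel : IsRelPath X P [f 0, f m] := isRelPath_pair hfe (Or.inr ⟨i, hw⟩)
          have hLrel : IsRelPath X P (Lof u r) :=
            isRelPath_Lof (fun t ht => (hbGood.2.2.2.2 t ht).2.1)
              (fun t ht => labels_of_good hbGood hf t ht)
          have hQqg : IsQG X P ((n : ℝ) + 2) [f 0, f m] := by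
            refine isQG_short (by positivity) ?_
            simp only [List.length_cons, List.length_nil]
            push_cast
            linarith
          have hLqg : IsQG X P ((n : ℝ) + 2) (Lof u r) := by
            refine isQG_short (by positivity) ?_
            rw [Lof_length]
            push_cast
            have : (r : ℝ) ≤ (n : ℝ) + 1 := by exact_mod_cast hrn
            linarith
          have hends0 : vtx [f 0, f m] 0 = vtx (Lof u r) 0 := by
            rw [vtx_pair0, vtx_Lof u r (by omega), hu0]
          have hends1 : vtx [f 0, f m] (([f 0, f m] : List G).length - 1) =
              vtx (Lof u r) ((Lof u r).length - 1) := by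
            simp only [List.length_cons, List.length_nil, Lof_length]
            rw [vtx_pair1, vtx_Lof u r (by omega)]
            have : r + 1 - 1 = r := by omega
            rw [this, hur]
          have hcomp : IsComponent P [f 0, f m] i 0 0 := isComponent_pair hw
          have hmain := (hε [f 0, f m] (Lof u r) hQrel hLrel
            (nonBacktracking_pair _ _) (nonBacktracking_Lof hbNB) hQqg hLqg
            hends0 hends1 i 0 0 hcomp).1
          have hnomatch : ¬∃ m₁ m₁', IsComponent P (Lof u r) i m₁ m₁' ∧
              (vtx [f 0, f m] 0)⁻¹ * vtx (Lof u r) m₁ ∈ P i := by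
            rintro ⟨m₁, m₁', hcomp1, hcoset1⟩
            obtain ⟨hle, hedges, -, -⟩ := hcomp1
            have hE := (isPEdge_Lof u r i m₁).1 (hedges m₁ le_rfl hle)
            rw [vtx_pair0, vtx_Lof u r (by omega)] at hcoset1
            refine hper m₁ hE.1 hE.2 ?_
            have : g⁻¹ * u m₁ = (g⁻¹ * f 0) * ((f 0)⁻¹ * u m₁) := by group
            rw [this]
            exact (P i).mul_mem hg0 hcoset1
          have := hmain hnomatch
          rw [vtx_pair0, vtx_pair1] at this
          omega

end Endpt

/-! ### The main induction -/

section Main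

variable {G : Type*} [Group G] {ι : Type*} {X : Set G} {P : ι → Subgroup G}

lemma lenXseg_shift (X : Set G) (f : ℕ → G) (a L : ℕ) :
    lenXseg X (fun t => f (a + t)) 0 L = lenXseg X f a (a + L) := by
  rw [lenXseg, lenXseg, Finset.sum_Ico_eq_sum_range, Finset.sum_Ico_eq_sum_range]
  simp only [Nat.sub_zero, Nat.add_sub_cancel_left]
  apply Finset.sum_congr rfl
  intro j hj
  have e1 : 0 + j = j := by omega
  rw [e1]
  rfl

lemma main (hrel : RelHypPair X P) (ν : ℕ) :
    ∀ n : ℕ, ∃ α : ℕ, ∀ (f : ℕ → G) (m : ℕ) (g : G) (i : ι),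
      m ≤ n → PathOK X P f m → TautF X P ν f m →
      g⁻¹ * f 0 ∈ P i → g⁻¹ * f m ∈ P i →
      (Mseg X P f m g i ≤ wdist X (f 0) (f m) + α ∧
        lenXseg X f 0 m ≤ Mseg X P f m g i + α) := by
  have hsym := hrel.2.1
  have hcl := hrel.2.2.1
  have hbcp := hrel.2.2.2.2
  intro n
  induction n with
  | zero =>
    refine ⟨0, ?_⟩
    intro f m g i hm _ _ _ _
    have hm0 : m = 0 := by omega
    subst hm0
    constructor
    · have : Mseg X P f 0 g i ≤ 0 := Mseg_le_of_forall (by intro j hj; omega)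
      omega
    · simp [lenXseg]
  | succ n IH =>
    obtain ⟨A, hA⟩ := IH
    obtain ⟨γ, hγ⟩ := endpt ⟨hrel.1, hsym, hcl, hrel.2.2.2.1, hbcp⟩ (n+1)
    obtain ⟨ε, hε⟩ := hbcp ((n : ℝ) + 2) (by
      have : (0:ℝ) ≤ (n:ℝ) := Nat.cast_nonneg n
      linarith)
    -- a convenient form of the induction hypothesis, for chunks of a longer path
    have happly : ∀ (f : ℕ → G) (m a c : ℕ) (g' : G) (i' : ι),
        PathOK X P f m → TautF X P ν f m → a ≤ c → c ≤ m → c - a ≤ n →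
        g'⁻¹ * f a ∈ P i' → g'⁻¹ * f c ∈ P i' →
        (Mseg X P (fun t => f (a+t)) (c-a) g' i' ≤ wdist X (f a) (f c) + A ∧
          lenXseg X f a c ≤ Mseg X P (fun t => f (a+t)) (c-a) g' i' + A) := by
      intro f m a c g' i' hf ht hac hcm hcn hg1 hg2
      have hsum : a + (c - a) = c := by omega
      have h := hA (fun t => f (a+t)) (c-a) g' i' hcn (hf.shift (by omega))
        (ht.shift (by omega)) (by simpa using hg1)
        (by simp only [hsum]; exact hg2)
      rw [lenXseg_shift] at h
      simp only [hsum] at h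
      exact h
    have heq2A : ∀ (f : ℕ → G) (m a c : ℕ) (i' : ι),
        PathOK X P f m → TautF X P ν f m → a ≤ c → c ≤ m → c - a ≤ n →
        f a = f c → lenXseg X f a c ≤ 2 * A := by
      intro f m a c i' hf ht hac hcm hcn hfac
      have h := happly f m a c (f a) i' hf ht hac hcm hcn
        (by simpa using (P i').one_mem)
        (by rw [← hfac]; simpa using (P i').one_mem)
      have h0 : wdist X (f a) (f c) = 0 := by rw [hfac, wdist_self]
      omega
    -- the core bound : a taut path with both endpoints on a coset g • P i and
    -- no P i-edge on that coset has bounded X-length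
    have hcore : ∀ (f : ℕ → G) (m : ℕ) (g : G) (i : ι), m ≤ n+1 →
        PathOK X P f m → TautF X P ν f m →
        g⁻¹ * f 0 ∈ P i → g⁻¹ * f m ∈ P i →
        (∀ j, j < m → ¬((f j)⁻¹ * f (j+1) ∈ P i ∧ g⁻¹ * f j ∈ P i)) →
        lenXseg X f 0 m ≤ (n+1) * (2*ε + 2*γ + 2*ν + 9*A + 1) + 2*A := by
      intro f m g i hm hf ht hg0 hgm hno
      set C₁ := 2*ε + 2*γ + 2*ν + 9*A + 1 with hC₁
      rcases Nat.lt_or_ge m 2 with hm2 | hm2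
      · -- m ≤ 1
        interval_cases m
        · simp [lenXseg]
        · exfalso
          refine hno 0 (by omega) ⟨?_, hg0⟩
          have he : (f 0)⁻¹ * f 1 = (g⁻¹ * f 0)⁻¹ * (g⁻¹ * f 1) := by group
          rw [he]
          exact (P i).mul_mem ((P i).inv_mem hg0) hgm
      · obtain ⟨r, b, hbGood, hbNB⟩ := surg f m m id (Good.init f m hm2 hf)
        set u : ℕ → G := fun t => f (b t) with hu
        have hu0 : u 0 = f 0 := by rw [hu]; simp [hbGood.2.1]
        have hur : u r = f m := hbGood.2.2.2.1
        have hrn : r ≤ n + 1 := le_trans hbGood.r_le_m hm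
        have hrpos : 0 < r := hbGood.1
        have hd0m : wdist X (f 0) (f m) ≤ γ :=
          hγ f m g i hm hf hg0 hgm hno
        -- BCP applied to the reduction and the one-edge path between the endpoints
        have hLrel : IsRelPath X P (Lof u r) :=
          isRelPath_Lof (fun t ht => (hbGood.2.2.2.2 t ht).2.1)
            (fun t ht => labels_of_good hbGood hf t ht)
        have hLqg : IsQG X P ((n : ℝ) + 2) (Lof u r) := by
          refine isQG_short (by positivity) ?_
          rw [Lof_length]
          push_cast
          have : (r : ℝ) ≤ (n : ℝ) + 1 := by exact_mod_cast hrn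
          linarith
        have hspan2 : ∀ (i'' : ι) (a c : ℕ), c < r →
            IsComponent P (Lof u r) i'' a c →
            wdist X (u a) (u (c+1)) ≤ 2*ε + γ := by
          intro i'' a c hcr hcomp
          have hac : a ≤ c := hcomp.1
          by_cases hfe : f 0 = f m
          · -- compare with the single-vertex path
            have hends0 : vtx (Lof u r) 0 = vtx [f 0] 0 := by
              rw [vtx_Lof u r (by omega), hu0]; rfl
            have hends1 : vtx (Lof u r) ((Lof u r).length - 1) =
                vtx [f 0] (([f 0] : List G).length - 1) := by
              simp only [Lof_length, List.length_cons, List.length_nil]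
              rw [vtx_Lof u r (by omega)]
              have h1 : r + 1 - 1 = r := by omega
              rw [h1, hur, ← hfe]; rfl
            have hmain := (hε (Lof u r) [f 0] hLrel (isRelPath_single _)
              (nonBacktracking_Lof hbNB) (nonBacktracking_single _) hLqg
              (isQG_short (by positivity) (by
                simp only [List.length_cons, List.length_nil]
                push_cast; linarith [Nat.cast_nonneg (α := ℝ) n]))
              hends0 hends1 i'' a c hcomp).1
            have hnm : ¬∃ m₁ m₁', IsComponent P [f 0] i'' m₁ m₁' ∧
                (vtx (Lof u r) a)⁻¹ * vtx [f 0] m₁ ∈ P i'' := by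
              rintro ⟨m₁, m₁', hcm, -⟩
              exact component_single hcm
            have := hmain hnm
            rw [vtx_Lof u r (by omega), vtx_Lof u r (by omega)] at this
            omega
          · -- compare with the single-edge path
            have hw : (f 0)⁻¹ * f m ∈ P i := by
              have he : (f 0)⁻¹ * f m = (g⁻¹ * f 0)⁻¹ * (g⁻¹ * f m) := by group
              rw [he]
              exact (P i).mul_mem ((P i).inv_mem hg0) hgm
            have hends0 : vtx (Lof u r) 0 = vtx [f 0, f m] 0 := by
              rw [vtx_Lof u r (by omega), hu0]; rfl
            have hends1 : vtx (Lof u r) ((Lof u r).length - 1) =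
                vtx [f 0, f m] (([f 0, f m] : List G).length - 1) := by
              simp only [Lof_length, List.length_cons, List.length_nil]
              rw [vtx_Lof u r (by omega)]
              have h1 : r + 1 - 1 = r := by omega
              rw [h1, hur]; rfl
            have hmain := hε (Lof u r) [f 0, f m] hLrel
              (isRelPath_pair hfe (Or.inr ⟨i, hw⟩))
              (nonBacktracking_Lof hbNB) (nonBacktracking_pair _ _) hLqg
              (isQG_short (by positivity) (by
                simp only [List.length_cons, List.length_nil]
                push_cast; linarith [Nat.cast_nonneg (α := ℝ) n]))
              hends0 hends1 i'' a c hcomp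
            by_cases hmatch : ∃ m₁ m₁', IsComponent P [f 0, f m] i'' m₁ m₁' ∧
                (vtx (Lof u r) a)⁻¹ * vtx [f 0, f m] m₁ ∈ P i''
            · obtain ⟨m₁, m₁', hcm, hcs⟩ := hmatch
              obtain ⟨hm₁, hm₁'⟩ := component_pair_eq hcm
              subst hm₁; subst hm₁'
              have h2 := hmain.2 0 0 hcm hcs
              rw [vtx_Lof u r (by omega), vtx_Lof u r (by omega)] at h2
              have h3 : wdist X (u a) (f 0) < ε := by
                have := h2.1
                rwa [vtx_pair0] at this
              have h4 : wdist X (u (c+1)) (f m) < ε := by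
                have := h2.2
                rwa [vtx_pair1] at this
              calc wdist X (u a) (u (c+1)) ≤
                  wdist X (u a) (f 0) + wdist X (f 0) (u (c+1)) :=
                    wdist_triangle hsym hcl _ _ _
              _ ≤ wdist X (u a) (f 0) +
                    (wdist X (f 0) (f m) + wdist X (f m) (u (c+1))) := by
                    have := wdist_triangle hsym hcl (f 0) (f m) (u (c+1))
                    omega
              _ ≤ 2*ε + γ := by
                    have h5 : wdist X (f m) (u (c+1)) = wdist X (u (c+1)) (f m) :=
                      wdist_symm hsym hcl _ _
                    omega
            · have := hmain.1 hmatch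
              rw [vtx_Lof u r (by omega), vtx_Lof u r (by omega)] at this
              omega
        -- whole-path special case or not
        by_cases hW : ∃ i'', (∀ k, k < r → (u k)⁻¹ * u (k+1) ∈ P i'') ∧ b r = m
        · obtain ⟨i'', hall, hbrm⟩ := hW
          have hcos : ∀ t, t ≤ r → (f 0)⁻¹ * u t ∈ P i'' := by
            intro t htr
            have := comp_coset (u := u) (i := i'') (a := 0) (c := r - 1)
              (by intro k hk1 hk2; exact hall k (by omega)) t (by omega) (by omega)
            rwa [hu0] at this
          have hfmc : (f 0)⁻¹ * f m ∈ P i'' := by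
            rw [← hbrm]
            exact hcos r le_rfl
          have hfgen : ∀ p q : ℕ, p ≤ q → q ≤ m → (f 0)⁻¹ * f p ∈ P i'' →
              (f 0)⁻¹ * f q ∈ P i'' → (f p)⁻¹ * f q ∈ P i'' := by
            intro p q hpq hqm h1 h2
            have he : (f p)⁻¹ * f q = ((f 0)⁻¹ * f p)⁻¹ * ((f 0)⁻¹ * f q) := by group
            rw [he]
            exact (P i'').mul_mem ((P i'').inv_mem h1) h2
          -- every edge with both endpoints on the coset f 0 • P i'' is short
          have hclaim : ∀ q, q < m → (f 0)⁻¹ * f q ∈ P i'' →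
              (f 0)⁻¹ * f (q+1) ∈ P i'' →
              wdist X (f q) (f (q+1)) ≤ γ + 2*ν + 4*A := by
            intro q hq hq1 hq2
            by_cases hshort : wdist X (f q) (f (q+1)) ≤ ν
            · omega
            · have hEq : (f q)⁻¹ * f (q+1) ∈ P i'' := hfgen q (q+1) (by omega) (by omega) hq1 hq2
              -- left piece
              have hL := happly f m 0 q (f 0) i'' hf ht (by omega) (by omega) (by omega)
                (by simpa using (P i'').one_mem) hq1
              have hML : Mseg X P (fun t => f (0+t)) (q-0) (f 0) i'' ≤ ν := by
                refine Mseg_le_of_forall ?_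
                intro p hp hp1 hp2
                simp only [Nat.zero_add] at hp1 hp2 ⊢
                have hEp : (f p)⁻¹ * f (p+1) ∈ P i'' :=
                  hfgen p (p+1) (by omega) (by omega) hp1 hp2
                have htaut := ht i'' p q (by omega) hq hEp hEq
                  (hfgen p q (by omega) (by omega) hp1 hq1)
                omega
              -- right piece
              have hR := happly f m (q+1) m (f 0) i'' hf ht (by omega) le_rfl (by omega)
                hq2 hfmc
              have hMR : Mseg X P (fun t => f (q+1+t)) (m-(q+1)) (f 0) i'' ≤ ν := by
                refine Mseg_le_of_forall ?_
                intro p hp hp1 hp2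
                have hidx1 : q + 1 + p < m := by omega
                have hEp : (f (q+1+p))⁻¹ * f (q+1+p+1) ∈ P i'' :=
                  hfgen (q+1+p) (q+1+p+1) (by omega) (by omega) hp1 hp2
                have htaut := ht i'' q (q+1+p) (by omega) (by omega) hEq hEp
                  (hfgen q (q+1+p) (by omega) (by omega) hq1 hp1)
                show wdist X (f (q+1+p)) (f (q+1+p+1)) ≤ ν
                omega
              have hdL : wdist X (f 0) (f q) ≤ ν + 2*A := by
                have h1 : wdist X (f 0) (f q) ≤ lenXseg X f 0 q :=
                  dist_le_lenXseg hsym hcl (by omega)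
                omega
              have hdR : wdist X (f (q+1)) (f m) ≤ ν + 2*A := by
                have h1 : wdist X (f (q+1)) (f m) ≤ lenXseg X f (q+1) m :=
                  dist_le_lenXseg hsym hcl (by omega)
                omega
              calc wdist X (f q) (f (q+1)) ≤
                  wdist X (f q) (f 0) + wdist X (f 0) (f (q+1)) :=
                    wdist_triangle hsym hcl _ _ _
              _ ≤ wdist X (f q) (f 0) +
                    (wdist X (f 0) (f m) + wdist X (f m) (f (q+1))) := by
                    have := wdist_triangle hsym hcl (f 0) (f m) (f (q+1))
                    omega
              _ ≤ γ + 2*ν + 4*A := by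
                    have e1 : wdist X (f q) (f 0) = wdist X (f 0) (f q) :=
                      wdist_symm hsym hcl _ _
                    have e2 : wdist X (f m) (f (q+1)) = wdist X (f (q+1)) (f m) :=
                      wdist_symm hsym hcl _ _
                    omega
          -- bound each block of the reduction
          have hblock : ∀ k, k < r → lenXseg X f (b k) (b (k+1)) ≤ C₁ := by
            intro k hk
            obtain ⟨a', c', ha1, ha2, ha3, ha4, ha5, ha6, ha7⟩ :=
              (hbGood.2.2.2.2 k hk).2.2
            have hbk : b k ≤ m := hbGood.b_le_m (by omega)
            have hbk1 : b (k+1) ≤ m := hbGood.b_le_m (by omega)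
            have hc'n : c' - a' ≤ n := by
              rcases ha7 with h | h
              · omega
              · omega
            -- outer chunks have equal endpoints
            have hout1 : lenXseg X f (b k) a' ≤ 2*A :=
              heq2A f m (b k) a' i hf ht ha1 (by omega) (by omega) ha4.symm
            have hout2 : lenXseg X f c' (b (k+1)) ≤ 2*A :=
              heq2A f m c' (b (k+1)) i hf ht ha3 hbk1 (by omega) ha5
            -- the middle chunk
            have hcos1 : (f 0)⁻¹ * f a' ∈ P i'' := by
              rw [ha4]
              exact hcos k (by omega)
            have hcos2 : (f 0)⁻¹ * f c' ∈ P i'' := by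
              rw [ha5]
              exact hcos (k+1) (by omega)
            have hmid := happly f m a' c' (f a') i'' hf ht (by omega) (by omega) hc'n
              (by simpa using (P i'').one_mem)
              (hfgen a' c' (by omega) (by omega) hcos1 hcos2)
            have hMmid : Mseg X P (fun t => f (a'+t)) (c'-a') (f a') i'' ≤
                γ + 2*ν + 4*A := by
              refine Mseg_le_of_forall ?_
              intro p hp hp1 hp2
              have hq1 : (f 0)⁻¹ * f (a'+p) ∈ P i'' := by
                have he : (f 0)⁻¹ * f (a'+p) =
                    ((f 0)⁻¹ * f a') * ((f a')⁻¹ * f (a'+p)) := by group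
                rw [he]
                exact (P i'').mul_mem hcos1 hp1
              have hq2 : (f 0)⁻¹ * f (a'+p+1) ∈ P i'' := by
                have he : (f 0)⁻¹ * f (a'+p+1) =
                    ((f 0)⁻¹ * f a') * ((f a')⁻¹ * f (a'+p+1)) := by group
                rw [he]
                exact (P i'').mul_mem hcos1 hp2
              exact hclaim (a'+p) (by omega) hq1 hq2
            have hcat : lenXseg X f (b k) a' + lenXseg X f a' c' +
                lenXseg X f c' (b (k+1)) = lenXseg X f (b k) (b (k+1)) := by
              rw [lenXseg_concat (f := f) (a := b k) (b := a') (c := c') ha1 ha2.le,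
                lenXseg_concat (f := f) (a := b k) (b := c') (c := b (k+1)) (by omega) ha3]
            omega
          have hiter : ∀ s, s ≤ r → lenXseg X f (b (r - s)) (b r) ≤ s * C₁ := by
            intro s
            induction s with
            | zero =>
              intro _
              simp [lenXseg]
            | succ s ihs =>
              intro hs
              have hk : r - (s+1) < r := by omega
              have hstep := hblock (r - (s+1)) hk
              have hnext : r - (s+1) + 1 = r - s := by omega
              rw [hnext] at hstep
              have hrec := ihs (by omega)
              have hcat : lenXseg X f (b (r - (s+1))) (b (r - s)) +
                  lenXseg X f (b (r - s)) (b r) =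
                  lenXseg X f (b (r - (s+1))) (b r) := by
                refine lenXseg_concat ?_ ?_
                · exact hbGood.bmono' (by omega) (by omega)
                · exact hbGood.bmono' (by omega) le_rfl
              calc lenXseg X f (b (r - (s+1))) (b r) = _ := hcat.symm
              _ ≤ C₁ + s * C₁ := by omega
              _ = (s+1) * C₁ := by ring
          have := hiter r le_rfl
          rw [Nat.sub_self, hbGood.2.1, hbrm] at this
          calc lenXseg X f 0 m ≤ r * C₁ := this
          _ ≤ (n+1) * C₁ + 2*A := by
              have : r * C₁ ≤ (n+1) * C₁ := Nat.mul_le_mul_right C₁ hrn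
              omega
        · -- generic case : iterate over components
          push_neg at hW
          have hjump : ∀ k, k < r → (∃ c, k ≤ c ∧ c < r ∧
              lenXseg X f (b k) (b (c+1)) ≤ C₁) := by
            intro k hk
            by_cases hkP : ∃ i'', (u k)⁻¹ * u (k+1) ∈ P i''
            · obtain ⟨i'', hE⟩ := hkP
              obtain ⟨a, c, hak, hkc, hcr, hedges, hmax1, hmax2⟩ :=
                comp_exists u r i'' hk hE
              refine ⟨c, hkc, hcr, ?_⟩
              have hcomp := isComponent_Lof hcr hedges (by omega) hmax1 hmax2
              have hsp := hspan2 i'' a c hcr hcomp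
              have hcosac : (u a)⁻¹ * u (c+1) ∈ P i'' :=
                comp_coset hedges (c+1) (by omega) le_rfl
              -- the expansion is a strictly shorter chunk
              have hnotall : ¬(b a = 0 ∧ b (c+1) = m) := by
                rintro ⟨hba, hbc⟩
                have ha0 : a = 0 := by
                  by_contra hcon
                  have := hbGood.bmono (t := 0) (t' := a) (by omega) (by omega)
                  rw [hbGood.2.1] at this
                  omega
                have hc1r : c + 1 = r := by
                  by_contra hcon
                  have h1 : c + 1 < r := by omega
                  have := hbGood.bmono (t := c+1) (t' := r) h1 le_rfl
                  have h2 := hbGood.2.2.1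
                  omega
                refine hW i'' ?_ (by rw [← hc1r]; exact hbc)
                intro k' hk'
                subst ha0
                exact hedges k' (by omega) (by omega)
              have hlen : b (c+1) - b a ≤ n := by
                have h1 : b (c+1) ≤ m := hbGood.b_le_m (by omega)
                rcases Nat.eq_zero_or_pos (b a) with h | h
                · have : b (c+1) < m := by
                    rcases Nat.lt_or_ge (b (c+1)) m with h' | h'
                    · exact h'
                    · exact absurd ⟨h, by omega⟩ hnotall
                  omega
                · omega
              have hchunk := happly f m (b a) (b (c+1)) (u a) i'' hf ht
                (hbGood.bmono' (by omega) (by omega)) (hbGood.b_le_m (by omega)) hlen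
                (by simpa [hu] using (P i'').one_mem) hcosac
              have hd : wdist X (f (b a)) (f (b (c+1))) ≤ 2*ε + γ := hsp
              have hfin : lenXseg X f (b a) (b (c+1)) ≤ 2*ε + γ + 2*A := by omega
              calc lenXseg X f (b k) (b (c+1)) ≤ lenXseg X f (b a) (b (c+1)) :=
                    lenXseg_mono (hbGood.bmono' hak (by omega)) le_rfl
              _ ≤ C₁ := by omega
            · -- an X-edge
              push_neg at hkP
              refine ⟨k, le_rfl, hk, ?_⟩
              obtain ⟨a', c', ha1, ha2, ha3, ha4, ha5, ha6, ha7⟩ :=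
                (hbGood.2.2.2.2 k hk).2.2
              have hbk1 : b (k+1) ≤ m := hbGood.b_le_m (by omega)
              have hout1 : lenXseg X f (b k) a' ≤ 2*A :=
                heq2A f m (b k) a' i hf ht ha1 (by omega) (by omega) ha4.symm
              have hout2 : lenXseg X f c' (b (k+1)) ≤ 2*A :=
                heq2A f m c' (b (k+1)) i hf ht ha3 hbk1 (by omega) ha5
              have hc'a' : c' = a' + 1 := by
                rcases ha6 with h | h
                · exact h
                · exfalso
                  obtain ⟨i'', hi''⟩ := h
                  refine hkP i'' ?_
                  have he : (u k)⁻¹ * u (k+1) = (f a')⁻¹ * f c' := by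
                    rw [ha4, ha5]
                  rw [he]
                  exact hi''
              have hmid : lenXseg X f a' c' ≤ 1 := by
                subst hc'a'
                rw [lenXseg_single]
                have ha'm : a' < m := by omega
                rcases (hf a' ha'm).2 with h | h
                · exact wdist_le_one h
                · exfalso
                  obtain ⟨i'', hi''⟩ := h
                  refine hkP i'' ?_
                  have he : (u k)⁻¹ * u (k+1) = (f a')⁻¹ * f (a'+1) := by
                    rw [ha4, ha5]
                  rw [he]
                  exact hi''
              have hcat : lenXseg X f (b k) a' + lenXseg X f a' c' +
                  lenXseg X f c' (b (k+1)) = lenXseg X f (b k) (b (k+1)) := by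
                rw [lenXseg_concat (f := f) (a := b k) (b := a') (c := c') ha1 ha2.le,
                  lenXseg_concat (f := f) (a := b k) (b := c') (c := b (k+1)) (by omega) ha3]
              omega
          -- iterate the jumps
          have hiter : ∀ s, ∀ k, k ≤ r → r - k ≤ s →
              lenXseg X f (b k) (b r) ≤ s * C₁ := by
            intro s
            induction s with
            | zero =>
              intro k hk hs
              have : k = r := by omega
              subst this
              simp [lenXseg]
            | succ s ihs =>
              intro k hk hs
              rcases Nat.eq_or_lt_of_le hk with rfl | hk'
              · simp [lenXseg]
              · obtain ⟨c, hkc, hcr, hbd⟩ := hjump k hk'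
                have hrec := ihs (c+1) (by omega) (by omega)
                have hcat : lenXseg X f (b k) (b (c+1)) +
                    lenXseg X f (b (c+1)) (b r) = lenXseg X f (b k) (b r) := by
                  refine lenXseg_concat ?_ ?_
                  · exact hbGood.bmono' (by omega) (by omega)
                  · exact hbGood.bmono' (by omega) le_rfl
                calc lenXseg X f (b k) (b r) = _ := hcat.symm
                _ ≤ C₁ + s * C₁ := by omega
                _ = (s+1) * C₁ := by ring
          have hmain2 := hiter r 0 (by omega) (by omega)
          rw [hbGood.2.1] at hmain2
          -- the tail
          have htail : lenXseg X f (b r) m ≤ 2*A :=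
            heq2A f m (b r) m i hf ht hbGood.2.2.1 le_rfl
              (by
                have h1 : 1 ≤ b r := by
                  have := hbGood.bmono (t := 0) (t' := r) hrpos le_rfl
                  rw [hbGood.2.1] at this
                  omega
                omega)
              hbGood.2.2.2.1
          have hcat : lenXseg X f 0 (b r) + lenXseg X f (b r) m =
              lenXseg X f 0 m := lenXseg_concat (by omega) hbGood.2.2.1
          have hrC : r * C₁ ≤ (n+1) * C₁ := Nat.mul_le_mul_right C₁ hrn
          omega
    -- now the full statement
    refine ⟨(n+1) * (2*ε + 2*γ + 2*ν + 9*A + 1) + 2*A + 2*ν + 2*A + ν, ?_⟩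
    intro f m g i hm hf ht hg0 hgm
    by_cases hcls : ∃ j, j < m ∧ g⁻¹ * f j ∈ P i ∧ g⁻¹ * f (j+1) ∈ P i
    · -- there is an edge on the coset
      have hne : (MsegSet X P f m g i).Nonempty := by
        obtain ⟨j, hj, h1, h2⟩ := hcls
        exact ⟨wdist X (f j) (f (j+1)), j, hj, h1, h2, rfl⟩
      obtain ⟨j₀, hj₀, hc1, hc2, hd₀⟩ := Mseg_mem hne
      set M := Mseg X P f m g i with hM
      -- any other edge on the coset is ν-short or bounded by M
      have hoth : ∀ q, q < m → q ≠ j₀ → g⁻¹ * f q ∈ P i → g⁻¹ * f (q+1) ∈ P i →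
          wdist X (f q) (f (q+1)) ≤ ν := by
        intro q hq hqj hq1 hq2
        have hqM : wdist X (f q) (f (q+1)) ≤ M := le_Mseg ⟨q, hq, hq1, hq2, rfl⟩
        rcases Nat.lt_or_ge M ν with h | h
        · omega
        · -- taut pair (q, j₀)
          have hEq : (f q)⁻¹ * f (q+1) ∈ P i := by
            have he : (f q)⁻¹ * f (q+1) = (g⁻¹ * f q)⁻¹ * (g⁻¹ * f (q+1)) := by group
            rw [he]; exact (P i).mul_mem ((P i).inv_mem hq1) hq2
          have hEj₀ : (f j₀)⁻¹ * f (j₀+1) ∈ P i := by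
            have he : (f j₀)⁻¹ * f (j₀+1) = (g⁻¹ * f j₀)⁻¹ * (g⁻¹ * f (j₀+1)) := by group
            rw [he]; exact (P i).mul_mem ((P i).inv_mem hc1) hc2
          rcases Nat.lt_or_ge q j₀ with hlt | hge
          · have htaut := ht i q j₀ hlt hj₀ hEq hEj₀
              (by
                have he : (f q)⁻¹ * f j₀ = (g⁻¹ * f q)⁻¹ * (g⁻¹ * f j₀) := by group
                rw [he]; exact (P i).mul_mem ((P i).inv_mem hq1) hc1)
            omega
          · have hgt : j₀ < q := by omega
            have htaut := ht i j₀ q hgt hq hEj₀ hEq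
              (by
                have he : (f j₀)⁻¹ * f q = (g⁻¹ * f j₀)⁻¹ * (g⁻¹ * f q) := by group
                rw [he]; exact (P i).mul_mem ((P i).inv_mem hc1) hq1)
            omega
      -- left and right pieces
      have hL := happly f m 0 j₀ g i hf ht (by omega) (by omega) (by omega) hg0 hc1
      have hR := happly f m (j₀+1) m g i hf ht (by omega) le_rfl (by omega) hc2 hgm
      have hML : Mseg X P (fun t => f (0+t)) (j₀-0) g i ≤ ν := by
        refine Mseg_le_of_forall ?_
        intro p hp hp1 hp2
        simp only [Nat.zero_add] at hp1 hp2 ⊢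
        exact hoth p (by omega) (by omega) hp1 hp2
      have hMR : Mseg X P (fun t => f (j₀+1+t)) (m-(j₀+1)) g i ≤ ν := by
        refine Mseg_le_of_forall ?_
        intro p hp hp1 hp2
        show wdist X (f (j₀+1+p)) (f (j₀+1+p+1)) ≤ ν
        exact hoth (j₀+1+p) (by omega) (by omega) hp1 hp2
      have hdL : wdist X (f 0) (f j₀) ≤ ν + 2*A := by
        have h1 : wdist X (f 0) (f j₀) ≤ lenXseg X f 0 j₀ :=
          dist_le_lenXseg hsym hcl (by omega)
        omega
      have hdR : wdist X (f (j₀+1)) (f m) ≤ ν + 2*A := by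
        have h1 : wdist X (f (j₀+1)) (f m) ≤ lenXseg X f (j₀+1) m :=
          dist_le_lenXseg hsym hcl (by omega)
        omega
      constructor
      · -- M ≤ d(f 0, f m) + α
        have htri : M ≤ wdist X (f j₀) (f 0) + wdist X (f 0) (f m) +
            wdist X (f m) (f (j₀+1)) := by
          rw [← hd₀]
          have h1 := wdist_triangle hsym hcl (f j₀) (f 0) (f (j₀+1))
          have h2 := wdist_triangle hsym hcl (f 0) (f m) (f (j₀+1))
          omega
        have e1 : wdist X (f j₀) (f 0) = wdist X (f 0) (f j₀) :=
          wdist_symm hsym hcl _ _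
        have e2 : wdist X (f m) (f (j₀+1)) = wdist X (f (j₀+1)) (f m) :=
          wdist_symm hsym hcl _ _
        omega
      · -- lenXseg ≤ M + α
        have hMLM : Mseg X P (fun t => f (0+t)) (j₀-0) g i ≤ M := by
          refine Mseg_le_of_forall ?_
          intro p hp hp1 hp2
          simp only [Nat.zero_add] at hp1 hp2 ⊢
          exact le_Mseg ⟨p, by omega, hp1, hp2, rfl⟩
        have hMRM : Mseg X P (fun t => f (j₀+1+t)) (m-(j₀+1)) g i ≤ M := by
          refine Mseg_le_of_forall ?_
          intro p hp hp1 hp2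
          exact le_Mseg ⟨j₀+1+p, by omega, hp1, hp2, rfl⟩
        have hcat : lenXseg X f 0 j₀ + lenXseg X f j₀ (j₀+1) +
            lenXseg X f (j₀+1) m = lenXseg X f 0 m := by
          rw [lenXseg_concat (f := f) (a := 0) (b := j₀) (c := j₀+1) (by omega) (by omega),
            lenXseg_concat (f := f) (a := 0) (b := j₀+1) (c := m) (by omega) (by omega)]
        rw [lenXseg_single] at hcat
        omega
    · -- no edge on the coset : the core bound applies
      push_neg at hcls
      have hM0 : Mseg X P f m g i ≤ 0 := by
        refine Mseg_le_of_forall ?_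
        intro j hj h1 h2
        exact absurd h2 (hcls j hj h1)
      have hno : ∀ j, j < m → ¬((f j)⁻¹ * f (j+1) ∈ P i ∧ g⁻¹ * f j ∈ P i) := by
        rintro j hj ⟨hE, hgj⟩
        refine hcls j hj hgj ?_
        have he : g⁻¹ * f (j+1) = (g⁻¹ * f j) * ((f j)⁻¹ * f (j+1)) := by group
        rw [he]
        exact (P i).mul_mem hgj hE
      have := hcore f m g i hm hf ht hg0 hgm hno
      omega

end Main

section GlueAux

variable {G : Type*} [Group G] {ι : Type*}

lemma vtx_eq_get {s : List G} {j : ℕ} (h : j < s.length) :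
    vtx s j = s.get ⟨j, h⟩ := by
  rw [vtx, List.getD_eq_getElem _ _ h, List.get_eq_getElem]

end GlueAux



section Stmt13

variable {G : Type*} [Group G] {ι : Type*}

/-- `p` is `ν`-taut: any two connected peripheral edges (two `P i`-edges in the same
coset of `P i`) satisfy `min (|e|_X, |e'|_X) < ν`. -/
def Taut (X : Set G) (P : ι → Subgroup G) (ν : ℕ) (p : List G) : Prop :=
  ∀ i j j', j < j' → IsPEdge P p i j → IsPEdge P p i j' → SameCoset P p i j j' →
    min (wdist X (vtx p j) (vtx p (j + 1))) (wdist X (vtx p j') (vtx p (j' + 1))) < ν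

/-- `M p g i`: the maximal `X`-length of an edge of `p` with both endpoints in the coset
`g • P i` (and `0` if there is no such edge). -/
noncomputable def maxPeriphEdge (X : Set G) (P : ι → Subgroup G) (p : List G)
    (g : G) (i : ι) : ℕ :=
  sSup {m | ∃ j, j + 1 < p.length ∧ g⁻¹ * vtx p j ∈ P i ∧ g⁻¹ * vtx p (j + 1) ∈ P i ∧
    wdist X (vtx p j) (vtx p (j + 1)) = m}

/-- The `X`-length of a path: the sum of the `X`-distances between consecutive
vertices. -/
noncomputable def lenX (X : Set G) (p : List G) : ℕ :=
  ∑ j ∈ Finset.range (p.length - 1), wdist X (vtx p j) (vtx p (j + 1))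

/-- For all `ν, ℓ` there is `α` such that any `ν`-taut path `s` of length `ℓ` in the
relative Cayley graph with both endpoints in a peripheral coset `g • P i` satisfies
`M(s) − α ≤ |s|_X ≤ len_X(s) ≤ M(s) + α`. -/
theorem taut_peripheral_endpoint_bounds (X : Set G) (P : ι → Subgroup G)
    (hrel : RelHypPair X P) (ν ℓ : ℕ) :
    ∃ α : ℕ, ∀ (s : List G) (g : G) (i : ι),
      IsRelPath X P s → Taut X P ν s → s.length = ℓ + 1 →
      g⁻¹ * vtx s 0 ∈ P i → g⁻¹ * vtx s (s.length - 1) ∈ P i →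
      (maxPeriphEdge X P s g i : ℤ) - (α : ℤ) ≤
          (wdist X (vtx s 0) (vtx s (s.length - 1)) : ℤ) ∧
        wdist X (vtx s 0) (vtx s (s.length - 1)) ≤ lenX X s ∧
        (lenX X s : ℤ) ≤ (maxPeriphEdge X P s g i : ℤ) + (α : ℤ) := by
  have hsym := hrel.2.1
  have hcl := hrel.2.2.1
  obtain ⟨α, hα⟩ := main hrel ν ℓ
  refine ⟨α, ?_⟩
  intro s g i hpath htaut hlen hg0 hgm
  have hlen1 : s.length - 1 = ℓ := by omega
  rw [hlen1] at hgm ⊢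
  have hOK : PathOK X P (vtx s) ℓ := by
    intro j hj
    have hchain := hpath.2
    rw [List.Chain', List.isChain_iff_getElem] at hchain
    have h := hchain j (by omega)
    rw [vtx_eq_get (by omega), vtx_eq_get (by omega), List.get_eq_getElem, List.get_eq_getElem]
    exact h
  have hT : TautF X P ν (vtx s) ℓ := by
    intro i' a c hac hc hEa hEc hC
    exact htaut i' a c hac ⟨by omega, hEa⟩ ⟨by omega, hEc⟩ hC
  have hMeq : maxPeriphEdge X P s g i = Mseg X P (vtx s) ℓ g i := by
    unfold maxPeriphEdge Mseg MsegSet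
    congr 1
    ext x
    constructor
    · rintro ⟨j, hj, h1, h2, h3⟩
      exact ⟨j, by omega, h1, h2, h3⟩
    · rintro ⟨j, hj, h1, h2, h3⟩
      exact ⟨j, by omega, h1, h2, h3⟩
  have hLeq : lenX X s = lenXseg X (vtx s) 0 ℓ := by
    unfold lenX lenXseg
    rw [hlen1, Finset.range_eq_Ico]
  obtain ⟨h1, h2⟩ := hα (vtx s) ℓ g i le_rfl hOK hT hg0 hgm
  refine ⟨?_, ?_, ?_⟩
  · rw [hMeq]
    omega
  · rw [hLeq]
    exact dist_le_lenXseg hsym hcl (by omega)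
  · rw [hMeq, hLeq]
    omega

end Stmt13
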